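/- For every p ∈ [2, ∞) and every x > 0, one has exp((1/p)·(x/tanh_p(x) − 1)) < sinh_p(x)/x < exp(x/tanh_p(x) − 1). -/

import Mathlib

open Real Set Filter Topology

/-- Generalized inverse sine: `arcsinp p x = ∫₀ˣ (1 - tᵖ)^(-1/p) dt`. -/
noncomputable def arcsinp (p x : ℝ) : ℝ := ∫ t in (0:ℝ)..x, (1 - t ^ p) ^ (-(1/p))

/-- The generalized half-pi: `π_p/2 = arcsin_p 1`. -/
noncomputable def pipHalf (p : ℝ) : ℝ := arcsinp p 1

/-- Generalized sine: the inverse of `arcsinp p` viewed as a map on `[0,1]`. -/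
noncomputable def sinp (p : ℝ) : ℝ → ℝ := Function.invFunOn (arcsinp p) (Set.Icc 0 1)

/-- Generalized cosine. -/
noncomputable def cosp (p x : ℝ) : ℝ := (1 - (sinp p x) ^ p) ^ (1/p : ℝ)

/-- Generalized tangent. -/
noncomputable def tanp (p x : ℝ) : ℝ := sinp p x / cosp p x

/-- Generalized inverse hyperbolic sine: `arsinhp p x = ∫₀ˣ (1 + tᵖ)^(-1/p) dt`. -/
noncomputable def arsinhp (p x : ℝ) : ℝ := ∫ t in (0:ℝ)..x, (1 + t ^ p) ^ (-(1/p))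

/-- Generalized hyperbolic sine: the inverse of `arsinhp p` viewed as a map on `[0,∞)`. -/
noncomputable def sinhp (p : ℝ) : ℝ → ℝ := Function.invFunOn (arsinhp p) (Set.Ici 0)

/-- Generalized hyperbolic cosine. -/
noncomputable def coshp (p x : ℝ) : ℝ := (1 + (sinhp p x) ^ p) ^ (1/p : ℝ)

/-- Generalized hyperbolic tangent. -/
noncomputable def tanhp (p x : ℝ) : ℝ := sinhp p x / coshp p x

namespace Aux
open MeasureTheory intervalIntegral
variable {p : ℝ}

lemma base_pos (hp : 0 < p) {t : ℝ} (ht : 0 ≤ t) : 0 < 1 + t ^ p := by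
  have := Real.rpow_nonneg ht p; linarith

lemma contAt_integrand (hp : 0 < p) {t : ℝ} (ht : 0 ≤ t) :
    ContinuousAt (fun t : ℝ => (1 + t ^ p) ^ (-(1/p))) t := by
  have h1 : ContinuousAt (fun t : ℝ => 1 + t ^ p) t :=
    (Real.continuousAt_rpow_const t p (Or.inr hp.le)).const_add 1
  exact ContinuousAt.comp (g := fun u : ℝ => u ^ (-(1/p)))
    (Real.continuousAt_rpow_const _ _ (Or.inl (base_pos hp ht).ne')) h1

lemma intable (hp : 0 < p) {a b : ℝ} (ha : 0 ≤ a) (hb : 0 ≤ b) :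
    IntervalIntegrable (fun t : ℝ => (1 + t ^ p) ^ (-(1/p))) volume a b := by
  apply ContinuousOn.intervalIntegrable
  intro t htm
  have ht : 0 ≤ t := le_trans (le_min ha hb) htm.1
  exact (contAt_integrand hp ht).continuousWithinAt

lemma hasDerivAt_arsinhp (hp : 0 < p) {y : ℝ} (hy : 0 < y) :
    HasDerivAt (arsinhp p) ((1 + y ^ p) ^ (-(1/p))) y := by
  apply intervalIntegral.integral_hasDerivAt_right (intable hp le_rfl hy.le)
  · exact ContinuousAt.stronglyMeasurableAtFilter isOpen_Ioi
      (fun t ht => contAt_integrand hp (le_of_lt ht)) y hy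
  · exact contAt_integrand hp hy.le

lemma arsinhp_zero : arsinhp p 0 = 0 := intervalIntegral.integral_same

lemma contOn_arsinhp (hp : 0 < p) : ContinuousOn (arsinhp p) (Ici 0) := by
  intro y hy
  have h := intervalIntegral.continuousOn_primitive_interval'
    (μ := volume) (f := fun t : ℝ => (1 + t ^ p) ^ (-(1/p))) (b₁ := 0) (b₂ := y + 1) (a := 0)
    (intable hp le_rfl (by simp at hy; linarith)) (by
      simp only [Set.uIcc_of_le (show (0:ℝ) ≤ y + 1 by simp at hy; linarith)]
      exact ⟨le_rfl, by simp at hy; linarith⟩)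
  have h2 : ContinuousWithinAt (arsinhp p) (uIcc 0 (y+1)) y := h y (by
    rw [Set.uIcc_of_le (by simp at hy; linarith)]
    exact ⟨hy, by linarith⟩)
  apply h2.mono_of_mem_nhdsWithin
  rw [Set.uIcc_of_le (by simp at hy; linarith)]
  have : Ici (0:ℝ) ∩ Iio (y+1) ⊆ Icc 0 (y+1) := fun z hz => ⟨hz.1, hz.2.le⟩
  exact Filter.mem_of_superset (inter_mem_nhdsWithin _ (Iio_mem_nhds (by linarith))) this

lemma contAt_Z (hp : 0 < p) (e : ℝ) {t : ℝ} (ht : 0 ≤ t) :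
    ContinuousAt (fun t : ℝ => (1 + t ^ p) ^ e) t := by
  have h1 : ContinuousAt (fun t : ℝ => 1 + t ^ p) t :=
    (Real.continuousAt_rpow_const t p (Or.inr hp.le)).const_add 1
  exact ContinuousAt.comp (g := fun u : ℝ => u ^ e)
    (Real.continuousAt_rpow_const _ _ (Or.inl (base_pos hp ht).ne')) h1

lemma pos_of_hasDerivAt {F F' : ℝ → ℝ} (hF0 : F 0 = 0)
    (hc : ContinuousOn F (Ici 0))
    (hd : ∀ y, 0 < y → HasDerivAt F (F' y) y)
    (hpos : ∀ y, 0 < y → 0 < F' y) :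
    ∀ y, 0 < y → 0 < F y := by
  have hm : StrictMonoOn F (Ici 0) := by
    apply strictMonoOn_of_deriv_pos (convex_Ici 0) hc
    intro y hy
    rw [interior_Ici] at hy
    rw [(hd y hy).deriv]; exact hpos y hy
  intro y hy
  have := hm self_mem_Ici (le_of_lt hy) hy
  rwa [hF0] at this

lemma nonneg_of_hasDerivAt {F F' : ℝ → ℝ} (hF0 : F 0 = 0)
    (hc : ContinuousOn F (Ici 0))
    (hd : ∀ y, 0 < y → HasDerivAt F (F' y) y)
    (hpos : ∀ y, 0 < y → 0 ≤ F' y) :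
    ∀ y, 0 ≤ y → 0 ≤ F y := by
  have hm : MonotoneOn F (Ici 0) := by
    apply monotoneOn_of_deriv_nonneg (convex_Ici 0) hc
    · intro y hy
      rw [interior_Ici] at hy
      exact (hd y hy).differentiableAt.differentiableWithinAt
    · intro y hy
      rw [interior_Ici] at hy
      rw [(hd y hy).deriv]; exact hpos y hy
  intro y hy
  have := hm self_mem_Ici hy hy
  rwa [hF0] at this

lemma pos_of_hasDerivAt_limit {F F' : ℝ → ℝ}
    (hlim : Tendsto F (𝓝[>] (0:ℝ)) (𝓝 0))
    (hd : ∀ y, 0 < y → HasDerivAt F (F' y) y)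
    (hpos : ∀ y, 0 < y → 0 < F' y) :
    ∀ y, 0 < y → 0 < F y := by
  have hm : StrictMonoOn F (Ioi 0) := by
    apply strictMonoOn_of_deriv_pos (convex_Ioi 0)
      (fun y hy => ((hd y hy).continuousAt.continuousWithinAt))
    intro y hy
    rw [interior_Ioi] at hy
    rw [(hd y hy).deriv]; exact hpos y hy
  have hnn : ∀ y, 0 < y → 0 ≤ F y := by
    intro y hy
    refine le_of_tendsto hlim ?_
    filter_upwards [Ioo_mem_nhdsGT_of_mem (Set.left_mem_Ico.2 hy)] with t ht
    exact (hm ht.1 hy ht.2).le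
  intro y hy
  have h2 := hm (show y/2 ∈ Ioi 0 by simp; linarith) (show y ∈ Ioi 0 from hy) (by linarith)
  have := hnn (y/2) (by linarith)
  linarith

lemma hasDerivAt_Z (hp : 0 < p) (e : ℝ) {y : ℝ} (hy : 0 < y) :
    HasDerivAt (fun t : ℝ => (1 + t ^ p) ^ e)
      (e * (1 + y ^ p) ^ (e - 1) * (p * y ^ (p - 1))) y := by
  have h1 : HasDerivAt (fun t : ℝ => 1 + t ^ p) (p * y ^ (p-1)) y :=
    (Real.hasDerivAt_rpow_const (Or.inl hy.ne')).const_add 1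
  have h2 : HasDerivAt (fun u : ℝ => u ^ e) (e * (1 + y ^ p) ^ (e - 1)) (1 + y ^ p) :=
    Real.hasDerivAt_rpow_const (Or.inl (base_pos hp hy.le).ne')
  exact h2.comp y h1

lemma A_pos (hp : 0 < p) {y : ℝ} (hy : 0 < y) : 0 < arsinhp p y := by
  refine pos_of_hasDerivAt (F' := fun y => (1 + y ^ p) ^ (-(1/p)))
    arsinhp_zero (contOn_arsinhp hp) (fun y hy => hasDerivAt_arsinhp hp hy) ?_ y hy
  intro y hy
  exact Real.rpow_pos_of_pos (base_pos hp hy.le) _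

lemma A_lt (hp : 0 < p) {y : ℝ} (hy : 0 < y) : arsinhp p y < y := by
  have h := pos_of_hasDerivAt (F := fun y => y - arsinhp p y)
    (F' := fun y => 1 - (1 + y ^ p) ^ (-(1/p)))
    (by simp [arsinhp_zero]) (continuousOn_id.sub (contOn_arsinhp hp))
    (fun y hy => (hasDerivAt_id y).sub (hasDerivAt_arsinhp hp hy)) ?_ y hy
  · have h' : 0 < y - arsinhp p y := h
    linarith
  · intro y hy
    have h1 : 1 < 1 + y ^ p := by
      have := Real.rpow_pos_of_pos hy p; linarith
    have := Real.rpow_lt_one_of_one_lt_of_neg h1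
      (show -(1/p) < 0 by rw [neg_lt, neg_zero]; positivity)
    linarith

lemma A_ge (hp : 0 < p) {y : ℝ} (hy : 0 ≤ y) :
    y * (1 + y ^ p) ^ (-(1/p)) ≤ arsinhp p y := by
  have h := nonneg_of_hasDerivAt
    (F := fun y => arsinhp p y - y * (1 + y ^ p) ^ (-(1/p)))
    (F' := fun y => (1 + y ^ p) ^ (-(1/p)) -
      (1 * (1 + y ^ p) ^ (-(1/p)) + y * (-(1/p) * (1 + y ^ p) ^ (-(1/p) - 1) * (p * y ^ (p - 1)))))
    (by simp [arsinhp_zero]) ?_ ?_ ?_ y hy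
  · have h' : 0 ≤ arsinhp p y - y * (1 + y ^ p) ^ (-(1/p)) := h
    linarith
  · apply (contOn_arsinhp hp).sub
    apply continuousOn_id.mul
    exact fun t ht => (contAt_Z hp _ ht).continuousWithinAt
  · intro y hy
    exact (hasDerivAt_arsinhp hp hy).sub
      ((hasDerivAt_id' y).mul (hasDerivAt_Z hp (-(1/p)) hy))
  · intro y hy
    show (0:ℝ) ≤ (1 + y ^ p) ^ (-(1/p)) -
      (1 * (1 + y ^ p) ^ (-(1/p)) + y * (-(1/p) * (1 + y ^ p) ^ (-(1/p) - 1) * (p * y ^ (p - 1))))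
    have hB : (0:ℝ) < (1 + y ^ p) ^ (-(1/p) - 1) := Real.rpow_pos_of_pos (base_pos hp hy.le) _
    have hv : (0:ℝ) < y ^ (p - 1) := Real.rpow_pos_of_pos hy _
    have key : 0 < y * ((1/p) * (1 + y ^ p) ^ (-(1/p) - 1) * (p * y ^ (p - 1))) := by
      have hp' : (0:ℝ) < 1/p := by positivity
      positivity
    nlinarith [key]

lemma one_add_rpow_le (hp1 : 1 ≤ p) {y : ℝ} (hy : 0 ≤ y) :
    (1 + y ^ p) ^ (1/p) ≤ 1 + y := by
  lift y to NNReal using hy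
  have h := NNReal.rpow_add_rpow_le_add 1 y hp1
  have hco := (NNReal.coe_le_coe).2 h
  push_cast [NNReal.coe_rpow] at hco
  simpa using hco

lemma A_ge_log (hp1 : 1 ≤ p) {y : ℝ} (hy : 0 ≤ y) :
    Real.log (1 + y) ≤ arsinhp p y := by
  have hp : 0 < p := by linarith
  have h := nonneg_of_hasDerivAt
    (F := fun y => arsinhp p y - Real.log (1 + y))
    (F' := fun y => (1 + y ^ p) ^ (-(1/p)) - (1 + y)⁻¹ * 1)
    (by simp [arsinhp_zero]) ?_ ?_ ?_ y hy
  · have h' : 0 ≤ arsinhp p y - Real.log (1 + y) := h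
    linarith
  · apply (contOn_arsinhp hp).sub
    intro t ht
    have : ContinuousAt (fun t : ℝ => Real.log (1 + t)) t := by
      have h0 : (0:ℝ) < 1 + t := by have : (0:ℝ) ≤ t := ht; linarith
      exact ContinuousAt.comp (Real.continuousAt_log h0.ne') (by fun_prop)
    exact this.continuousWithinAt
  · intro y hy
    refine (hasDerivAt_arsinhp hp hy).sub ?_
    exact (Real.hasDerivAt_log (by linarith : (1:ℝ) + y ≠ 0)).comp y
      ((hasDerivAt_id y).const_add 1)
  · intro y hy
    show (0:ℝ) ≤ (1 + y ^ p) ^ (-(1/p)) - (1 + y)⁻¹ * 1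
    rw [mul_one]
    have hkey : (1 + y ^ p) ^ (1/p) ≤ 1 + y := one_add_rpow_le hp1 hy.le
    have hcpos : (0:ℝ) < (1 + y ^ p) ^ (1/p) := Real.rpow_pos_of_pos (base_pos hp hy.le) _
    have : (1 + y)⁻¹ ≤ ((1 + y ^ p) ^ (1/p))⁻¹ := by
      apply inv_anti₀ hcpos hkey
    rw [Real.rpow_neg (base_pos hp hy.le).le] at *
    linarith

lemma exists_A_eq (hp1 : 1 ≤ p) {x : ℝ} (hx : 0 < x) :
    ∃ y ∈ Ici (0:ℝ), arsinhp p y = x := by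
  have hp : 0 < p := by linarith
  set Y : ℝ := Real.exp x - 1 with hY
  have hY0 : 0 ≤ Y := by have := Real.one_le_exp hx.le; simp [hY]; linarith
  have hAY : x ≤ arsinhp p Y := by
    have := A_ge_log (p := p) hp1 hY0
    rwa [show (1:ℝ) + Y = Real.exp x by simp [hY], Real.log_exp] at this
  have hc : ContinuousOn (arsinhp p) (Icc 0 Y) := (contOn_arsinhp hp).mono Icc_subset_Ici_self
  have hIVT := intermediate_value_Icc hY0 hc
  have hx' : x ∈ Icc (arsinhp p 0) (arsinhp p Y) := by
    rw [arsinhp_zero]; exact ⟨hx.le, hAY⟩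
  obtain ⟨y, hy, hyx⟩ := hIVT hx'
  exact ⟨y, hy.1, hyx⟩

lemma chi_pos (hp : 2 ≤ p) {y : ℝ} (hy : 0 < y) :
    y * (1 + y ^ p) < arsinhp p y * (1 + p * y ^ p) * (1 + y ^ p) ^ (1/p) := by
  have hp0 : 0 < p := by linarith
  have hF := pos_of_hasDerivAt
    (F := fun y => arsinhp p y * ((1 + p * y ^ p) * (1 + y ^ p) ^ (1/p - 1)) - y)
    (F' := fun y => ((p - 1) * y ^ p * (1 + y ^ p) +
      arsinhp p y * y ^ (p-1) * (1 + y ^ p) ^ (1/p) * (p^2 - p + 1 + p * y ^ p)) /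
      ((1 + y ^ p) * (1 + y ^ p)))
    (by simp [arsinhp_zero]) ?_ ?_ ?_ y hy
  · have hY : (0:ℝ) < 1 + y ^ p := base_pos hp0 hy.le
    have hF' : 0 < arsinhp p y * ((1 + p * y ^ p) * (1 + y ^ p) ^ (1/p - 1)) - y := hF
    rw [Real.rpow_sub hY, Real.rpow_one] at hF'
    rw [show arsinhp p y * ((1 + p * y ^ p) * ((1 + y ^ p) ^ (1/p) / (1 + y ^ p)))
        = arsinhp p y * (1 + p * y ^ p) * (1 + y ^ p) ^ (1/p) / (1 + y ^ p) from by ring] at hF'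
    have h2 : y < arsinhp p y * (1 + p * y ^ p) * (1 + y ^ p) ^ (1/p) / (1 + y ^ p) := by
      linarith
    exact (lt_div_iff₀ hY).mp h2
  · -- continuity
    refine ContinuousOn.sub (ContinuousOn.mul (contOn_arsinhp hp0) ?_) continuousOn_id
    intro t ht
    have h1 : ContinuousAt (fun t : ℝ => 1 + p * t ^ p) t :=
      ((Real.continuousAt_rpow_const t p (Or.inr hp0.le)).const_mul p).const_add 1
    exact (h1.mul (contAt_Z hp0 _ ht)).continuousWithinAt
  · -- derivative
    intro y hy
    have hY : (0:ℝ) < 1 + y ^ p := base_pos hp0 hy.le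
    have h1 : HasDerivAt (fun y : ℝ => 1 + p * y ^ p) (p * (p * y ^ (p-1))) y :=
      ((Real.hasDerivAt_rpow_const (Or.inl hy.ne')).const_mul p).const_add 1
    have h2 := h1.mul (hasDerivAt_Z hp0 (1/p - 1) hy)
    have h3 := ((hasDerivAt_arsinhp hp0 hy).mul h2).sub (hasDerivAt_id y)
    refine h3.congr_deriv (Eq.symm ?_)
    simp only [Pi.mul_apply, Pi.pow_apply, id_eq]
    rw [Real.rpow_neg hY.le, Real.rpow_sub hY, Real.rpow_sub hY, Real.rpow_sub hY, Real.rpow_one]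
    have hyp : y ^ p = y ^ (p-1) * y := by
      rw [← Real.rpow_add_one hy.ne' (p-1)]; ring_nf
    have hC : (0:ℝ) < (1 + y ^ p) ^ (1/p) := Real.rpow_pos_of_pos hY _
    field_simp
    ring
  · -- positivity of F'
    intro y hy
    have hY : (0:ℝ) < 1 + y ^ p := base_pos hp0 hy.le
    have hC : (0:ℝ) < (1 + y ^ p) ^ (1/p) := Real.rpow_pos_of_pos hY _
    have hu : (0:ℝ) < y ^ p := Real.rpow_pos_of_pos hy _
    have hv : (0:ℝ) < y ^ (p-1) := Real.rpow_pos_of_pos hy _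
    have hA : 0 < arsinhp p y := A_pos hp0 hy
    show (0:ℝ) < ((p - 1) * y ^ p * (1 + y ^ p) +
      arsinhp p y * y ^ (p-1) * (1 + y ^ p) ^ (1/p) * (p^2 - p + 1 + p * y ^ p)) /
      ((1 + y ^ p) * (1 + y ^ p))
    apply div_pos _ (by positivity)
    have h1 : 0 < (p - 1) * y ^ p * (1 + y ^ p) := mul_pos (mul_pos (by linarith) hu) hY
    have h2 : 0 < arsinhp p y * y ^ (p-1) * (1 + y ^ p) ^ (1/p) * (p^2 - p + 1 + p * y ^ p) := by
      have : (0:ℝ) < p^2 - p + 1 + p * y ^ p := by nlinarith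
      positivity
    linarith

lemma psi_pos (hp : 2 ≤ p) {y : ℝ} (hy : 0 < y) :
    (p + 1) * (y * (1 + y ^ p)) <
      arsinhp p y * ((p + 1) + p * y ^ p) * (1 + y ^ p) ^ (1/p) := by
  have hp0 : 0 < p := by linarith
  have hF := pos_of_hasDerivAt
    (F := fun y => arsinhp p y * (((p+1) + p * y ^ p) * (1 + y ^ p) ^ (1/p - 1)) - (p+1) * y)
    (F' := fun y => (arsinhp p y * y ^ (p-1) * (1 + y ^ p) ^ (1/p) * (1 + p * y ^ p)
      - y ^ p * (1 + y ^ p)) / ((1 + y ^ p) * (1 + y ^ p)))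
    (by simp [arsinhp_zero]) ?_ ?_ ?_ y hy
  · have hY : (0:ℝ) < 1 + y ^ p := base_pos hp0 hy.le
    have hF' : 0 < arsinhp p y * (((p+1) + p * y ^ p) * (1 + y ^ p) ^ (1/p - 1)) - (p+1)*y := hF
    rw [Real.rpow_sub hY, Real.rpow_one] at hF'
    rw [show arsinhp p y * (((p+1) + p * y ^ p) * ((1 + y ^ p) ^ (1/p) / (1 + y ^ p)))
        = arsinhp p y * ((p+1) + p * y ^ p) * (1 + y ^ p) ^ (1/p) / (1 + y ^ p) from by
      ring] at hF'
    have h2 : (p+1) * y < arsinhp p y * ((p+1) + p * y ^ p) * (1 + y ^ p) ^ (1/p) / (1 + y ^ p) := by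
      linarith
    calc (p+1) * (y * (1+y^p)) = ((p+1) * y) * (1+y^p) := by ring
    _ < _ := (lt_div_iff₀ hY).mp h2
  · refine ContinuousOn.sub (ContinuousOn.mul (contOn_arsinhp hp0) ?_)
      (continuousOn_const.mul continuousOn_id)
    intro t ht
    have h1 : ContinuousAt (fun t : ℝ => (p+1) + p * t ^ p) t :=
      ((Real.continuousAt_rpow_const t p (Or.inr hp0.le)).const_mul p).const_add (p+1)
    exact (h1.mul (contAt_Z hp0 _ ht)).continuousWithinAt
  · intro y hy
    have hY : (0:ℝ) < 1 + y ^ p := base_pos hp0 hy.le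
    have h1 : HasDerivAt (fun y : ℝ => (p+1) + p * y ^ p) (p * (p * y ^ (p-1))) y :=
      ((Real.hasDerivAt_rpow_const (Or.inl hy.ne')).const_mul p).const_add (p+1)
    have h2 := h1.mul (hasDerivAt_Z hp0 (1/p - 1) hy)
    have h3 := ((hasDerivAt_arsinhp hp0 hy).mul h2).sub ((hasDerivAt_id y).const_mul (p+1))
    refine h3.congr_deriv (Eq.symm ?_)
    simp only [Pi.mul_apply, Pi.pow_apply, id_eq]
    rw [Real.rpow_neg hY.le, Real.rpow_sub hY, Real.rpow_sub hY, Real.rpow_sub hY, Real.rpow_one]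
    have hC : (0:ℝ) < (1 + y ^ p) ^ (1/p) := Real.rpow_pos_of_pos hY _
    field_simp
    ring
  · intro y hy
    have hY : (0:ℝ) < 1 + y ^ p := base_pos hp0 hy.le
    have hC : (0:ℝ) < (1 + y ^ p) ^ (1/p) := Real.rpow_pos_of_pos hY _
    have hu : (0:ℝ) < y ^ p := Real.rpow_pos_of_pos hy _
    have hv : (0:ℝ) < y ^ (p-1) := Real.rpow_pos_of_pos hy _
    have hA : 0 < arsinhp p y := A_pos hp0 hy
    have hyp : y ^ p = y ^ (p-1) * y := by
      rw [← Real.rpow_add_one hy.ne' (p-1)]; ring_nf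
    show (0:ℝ) < (arsinhp p y * y ^ (p-1) * (1 + y ^ p) ^ (1/p) * (1 + p * y ^ p)
      - y ^ p * (1 + y ^ p)) / ((1 + y ^ p) * (1 + y ^ p))
    apply div_pos _ (by positivity)
    have hchi := chi_pos hp hy
    -- multiply chi by y^(p-1) : A*(1+p u)*C > y*Y  gives  A*v*C*(1+pu) > u*Y
    nlinarith [mul_lt_mul_of_pos_left hchi hv]
lemma phi_pos (hp : 2 ≤ p) {y : ℝ} (hy : 0 < y) :
    p * (y^2 * (1 + y ^ p)) <
      (p - 1) * (arsinhp p y * (1 + y ^ p) ^ (1/p) * y) * (1 + y ^ p)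
      + (arsinhp p y)^2 * (1 + y ^ p) ^ (1/p) * (1 + y ^ p) ^ (1/p) := by
  have hp0 : 0 < p := by linarith
  have hF := pos_of_hasDerivAt
    (F := fun y => (p - 1) * (arsinhp p y * (1 + y ^ p) ^ (1/p) * y)
      + (arsinhp p y)^2 * (1 + y ^ p) ^ (2/p - 1) - p * y^2)
    (F' := fun y => (((p - 1) * y - 2 * p * y) * ((1 + y ^ p) * (1 + y ^ p))
      + (p - 1) * arsinhp p y * y ^ (p-1) * y * (1 + y ^ p) ^ (1/p) * (1 + y ^ p)
      + (p - 1) * arsinhp p y * (1 + y ^ p) ^ (1/p) * ((1 + y ^ p) * (1 + y ^ p))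
      + 2 * arsinhp p y * (1 + y ^ p) ^ (1/p) * (1 + y ^ p)
      + (2 - p) * (arsinhp p y)^2 * y ^ (p-1) * (1 + y ^ p) ^ (1/p) * (1 + y ^ p) ^ (1/p))
      / ((1 + y ^ p) * (1 + y ^ p)))
    (by simp [arsinhp_zero]) ?_ ?_ ?_ y hy
  · have hY : (0:ℝ) < 1 + y ^ p := base_pos hp0 hy.le
    set A := arsinhp p y
    set C := (1 + y ^ p) ^ (1/p) with hCdef
    have hF' : 0 < (p - 1) * (A * C * y) + A^2 * (1 + y ^ p) ^ (2/p - 1) - p * y^2 := hF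
    rw [show (2:ℝ)/p - 1 = 1/p + 1/p - 1 by ring, Real.rpow_sub hY, Real.rpow_add hY,
      Real.rpow_one, ← hCdef] at hF'
    rw [show (p - 1) * (A * C * y) + A^2 * (C * C / (1 + y ^ p)) - p * y^2
        = ((p - 1) * (A * C * y) * (1 + y ^ p) + A^2 * C * C - p * (y^2 * (1 + y ^ p)))
          / (1 + y ^ p) from by field_simp] at hF'
    have := (lt_div_iff₀ hY).mp hF'
    linarith [this]
  · -- continuity
    refine ContinuousOn.sub (ContinuousOn.add (continuousOn_const.mul
      ((ContinuousOn.mul (contOn_arsinhp hp0) ?_).mul continuousOn_id))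
      ((ContinuousOn.pow (contOn_arsinhp hp0) 2).mul ?_))
      (continuousOn_const.mul (continuousOn_pow 2))
    · exact fun t ht => (contAt_Z hp0 _ ht).continuousWithinAt
    · exact fun t ht => (contAt_Z hp0 _ ht).continuousWithinAt
  · -- derivative
    intro y hy
    have hY : (0:ℝ) < 1 + y ^ p := base_pos hp0 hy.le
    have h1 := (((hasDerivAt_arsinhp hp0 hy).mul (hasDerivAt_Z hp0 (1/p) hy)).mul
      (hasDerivAt_id y)).const_mul (p - 1)
    have h2 := ((hasDerivAt_arsinhp hp0 hy).pow 2).mul (hasDerivAt_Z hp0 (2/p - 1) hy)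
    have h3 := (h1.add h2).sub ((hasDerivAt_pow 2 y).const_mul p)
    refine h3.congr_deriv (Eq.symm ?_)
    simp only [Pi.mul_apply, Pi.pow_apply, id_eq]
    rw [show (2:ℝ)/p - 1 - 1 = 1/p + 1/p - 1 - 1 by ring,
      show (2:ℝ)/p - 1 = 1/p + 1/p - 1 by ring]
    simp only [Real.rpow_neg hY.le, Real.rpow_sub hY, Real.rpow_add hY, Real.rpow_one]
    have hC : (0:ℝ) < (1 + y ^ p) ^ (1/p) := Real.rpow_pos_of_pos hY _
    have hyp : y ^ p = y ^ (p-1) * y := by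
      rw [← Real.rpow_add_one hy.ne' (p-1)]; ring_nf
    field_simp
    ring
  · -- positivity
    intro y hy
    have hY : (0:ℝ) < 1 + y ^ p := base_pos hp0 hy.le
    have hC : (0:ℝ) < (1 + y ^ p) ^ (1/p) := Real.rpow_pos_of_pos hY _
    have hu : (0:ℝ) < y ^ p := Real.rpow_pos_of_pos hy _
    have hv : (0:ℝ) < y ^ (p-1) := Real.rpow_pos_of_pos hy _
    have hA : 0 < arsinhp p y := A_pos hp0 hy
    have hAy : arsinhp p y < y := A_lt hp0 hy
    have hY1 : (1:ℝ) ≤ 1 + y ^ p := by linarith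
    have hC1 : (1:ℝ) ≤ (1 + y ^ p) ^ (1/p) := Real.one_le_rpow hY1 (by positivity)
    have hC2 : (1 + y ^ p) ^ (1/p) * (1 + y ^ p) ^ (1/p) ≤ 1 + y ^ p := by
      have h := Real.rpow_le_rpow_of_exponent_le hY1 (show 2/p ≤ 1 by
        rw [div_le_one hp0]; linarith)
      rw [show (2:ℝ)/p = 1/p + 1/p by ring, Real.rpow_add hY, Real.rpow_one] at h
      exact h
    have hpsi := psi_pos hp hy
    set A := arsinhp p y
    set C := (1 + y ^ p) ^ (1/p)
    set v := y ^ (p-1) with hvdef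
    have hyp : y ^ p = v * y := by
      rw [hvdef, ← Real.rpow_add_one hy.ne' (p-1)]; ring_nf
    show (0:ℝ) < (((p - 1) * y - 2 * p * y) * ((1 + y ^ p) * (1 + y ^ p))
      + (p - 1) * A * v * y * C * (1 + y ^ p)
      + (p - 1) * A * C * ((1 + y ^ p) * (1 + y ^ p))
      + 2 * A * C * (1 + y ^ p)
      + (2 - p) * A^2 * v * C * C) / ((1 + y ^ p) * (1 + y ^ p))
    apply div_pos _ (by positivity)
    -- key: C ≤ 1 + y^p
    have hCY : C ≤ 1 + y ^ p := le_trans (by nlinarith) hC2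
    -- A^2 * v * C * C ≤ A * (v*y) * C * (1 + y^p)
    have hAC : A * C ≤ y * (1 + y ^ p) := mul_le_mul hAy.le hCY hC.le hy.le
    have h1 : A^2 * v * C * C ≤ A * (v * y) * C * (1 + y ^ p) := by
      nlinarith [mul_le_mul_of_nonneg_left hAC (le_of_lt (mul_pos (mul_pos hA hv) hC))]
    rw [hyp] at hpsi h1 ⊢
    have hY' : (0:ℝ) < 1 + v * y := by rw [← hyp]; exact hY
    have key : (0:ℝ) < A * ((p+1) + p * (v*y)) * C - (p+1) * (y * (1 + v*y)) := by linarith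
    nlinarith [mul_pos hY' key,
      mul_nonneg (show (0:ℝ) ≤ p - 2 by linarith) (sub_nonneg.2 h1)]
lemma tendsto_ratio (hp : 0 < p) :
    Tendsto (fun y => arsinhp p y / y) (𝓝[>] (0:ℝ)) (𝓝 1) := by
  have hlow : Tendsto (fun y : ℝ => (1 + y ^ p) ^ (-(1/p))) (𝓝[>] (0:ℝ)) (𝓝 1) := by
    have h : Tendsto (fun t : ℝ => (1 + t ^ p) ^ (-(1/p))) (𝓝[>] (0:ℝ))
        (𝓝 ((1 + (0:ℝ) ^ p) ^ (-(1/p)))) :=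
      ((contAt_Z hp (-(1/p)) (le_refl (0:ℝ))).tendsto).mono_left nhdsWithin_le_nhds
    simpa [Real.zero_rpow hp.ne', Real.one_rpow] using h
  refine tendsto_of_tendsto_of_tendsto_of_le_of_le' hlow tendsto_const_nhds ?_ ?_
  · filter_upwards [self_mem_nhdsWithin] with y hy
    have hy' : (0:ℝ) < y := hy
    rw [le_div_iff₀ hy']
    have := A_ge hp hy'.le
    linarith [this]
  · filter_upwards [self_mem_nhdsWithin] with y hy
    have hy' : (0:ℝ) < y := hy
    rw [div_le_one hy']
    exact (A_lt hp hy').le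

lemma tendsto_C (hp : 0 < p) :
    Tendsto (fun y : ℝ => (1 + y ^ p) ^ (1/p)) (𝓝[>] (0:ℝ)) (𝓝 1) := by
  have h : Tendsto (fun t : ℝ => (1 + t ^ p) ^ (1/p)) (𝓝[>] (0:ℝ))
      (𝓝 ((1 + (0:ℝ) ^ p) ^ (1/p))) :=
    ((contAt_Z hp (1/p) (le_refl (0:ℝ))).tendsto).mono_left nhdsWithin_le_nhds
  simpa [Real.zero_rpow hp.ne', Real.one_rpow] using h

lemma H1_pos (hp : 2 ≤ p) {y : ℝ} (hy : 0 < y) :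
    (1/p) * (arsinhp p y * (1 + y ^ p) ^ (1/p) / y - 1) <
      Real.log y - Real.log (arsinhp p y) := by
  have hp0 : 0 < p := by linarith
  have hF := pos_of_hasDerivAt_limit
    (F := fun y => Real.log y - Real.log (arsinhp p y)
      - (1/p) * (arsinhp p y * (1 + y ^ p) ^ (1/p) / y - 1))
    (F' := fun y => ((p - 1) * (arsinhp p y * (1 + y ^ p) ^ (1/p) * y) * (1 + y ^ p)
      + (arsinhp p y)^2 * (1 + y ^ p) ^ (1/p) * (1 + y ^ p) ^ (1/p) - p * (y^2 * (1 + y ^ p)))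
      / (p * (1 + y ^ p) ^ (1/p) * arsinhp p y * y^2 * (1 + y ^ p)))
    ?_ ?_ ?_ y hy
  · have h' : 0 < Real.log y - Real.log (arsinhp p y)
      - (1/p) * (arsinhp p y * (1 + y ^ p) ^ (1/p) / y - 1) := hF
    linarith
  · -- limit
    have hr := tendsto_ratio hp0
    have hc := tendsto_C hp0
    have hlog : Tendsto (fun y => Real.log (arsinhp p y / y)) (𝓝[>] (0:ℝ)) (𝓝 0) := by
      have := (Real.continuousAt_log one_ne_zero).tendsto.comp hr
      simpa [Function.comp_def] using this
    have hcomb : Tendsto (fun y => -(Real.log (arsinhp p y / y))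
        - (1/p) * ((arsinhp p y / y) * (1 + y ^ p) ^ (1/p) - 1)) (𝓝[>] (0:ℝ)) (𝓝 0) := by
      have h2 := ((hr.mul hc).sub_const 1).const_mul (1/p)
      have h3 := (hlog.neg).sub h2
      simpa using h3
    refine Tendsto.congr' ?_ hcomb
    filter_upwards [self_mem_nhdsWithin] with z hz
    have hz' : (0:ℝ) < z := hz
    have hA : 0 < arsinhp p z := A_pos hp0 hz'
    rw [Real.log_div hA.ne' hz'.ne']
    ring
  · -- derivative
    intro y hy
    have hY : (0:ℝ) < 1 + y ^ p := base_pos hp0 hy.le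
    have hA : 0 < arsinhp p y := A_pos hp0 hy
    have hC : (0:ℝ) < (1 + y ^ p) ^ (1/p) := Real.rpow_pos_of_pos hY _
    have h1 : HasDerivAt (fun y => Real.log (arsinhp p y))
        ((arsinhp p y)⁻¹ * (1 + y ^ p) ^ (-(1/p))) y :=
      (Real.hasDerivAt_log hA.ne').comp y (hasDerivAt_arsinhp hp0 hy)
    have h2 := ((hasDerivAt_arsinhp hp0 hy).mul (hasDerivAt_Z hp0 (1/p) hy)).div
      (hasDerivAt_id y) hy.ne'
    have h3 := ((Real.hasDerivAt_log hy.ne').sub h1).sub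
      ((h2.sub_const 1).const_mul (1/p))
    refine h3.congr_deriv (Eq.symm ?_)
    simp only [Pi.mul_apply, Pi.pow_apply, id_eq]
    simp only [Real.rpow_neg hY.le, Real.rpow_sub hY, Real.rpow_one]
    have hyp : y ^ p = y ^ (p-1) * y := by
      rw [← Real.rpow_add_one hy.ne' (p-1)]; ring_nf
    rw [hyp]
    field_simp
    ring
  · -- positivity of derivative
    intro y hy
    have hY : (0:ℝ) < 1 + y ^ p := base_pos hp0 hy.le
    have hA : 0 < arsinhp p y := A_pos hp0 hy
    have hC : (0:ℝ) < (1 + y ^ p) ^ (1/p) := Real.rpow_pos_of_pos hY _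
    have hphi := phi_pos hp hy
    show (0:ℝ) < ((p - 1) * (arsinhp p y * (1 + y ^ p) ^ (1/p) * y) * (1 + y ^ p)
      + (arsinhp p y)^2 * (1 + y ^ p) ^ (1/p) * (1 + y ^ p) ^ (1/p) - p * (y^2 * (1 + y ^ p)))
      / (p * (1 + y ^ p) ^ (1/p) * arsinhp p y * y^2 * (1 + y ^ p))
    apply div_pos (by linarith) (by positivity)

lemma H2_pos (hp : 2 ≤ p) {y : ℝ} (hy : 0 < y) :
    Real.log y - Real.log (arsinhp p y) <
      arsinhp p y * (1 + y ^ p) ^ (1/p) / y - 1 := by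
  have hp0 : 0 < p := by linarith
  have hF := pos_of_hasDerivAt_limit
    (F := fun y => arsinhp p y * (1 + y ^ p) ^ (1/p) / y - 1
      - (Real.log y - Real.log (arsinhp p y)))
    (F' := fun y => (y^2 * (1 + y ^ p)
      - (arsinhp p y)^2 * (1 + y ^ p) ^ (1/p) * (1 + y ^ p) ^ (1/p))
      / ((1 + y ^ p) ^ (1/p) * arsinhp p y * y^2 * (1 + y ^ p)))
    ?_ ?_ ?_ y hy
  · have h' : 0 < arsinhp p y * (1 + y ^ p) ^ (1/p) / y - 1
      - (Real.log y - Real.log (arsinhp p y)) := hF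
    linarith
  · have hr := tendsto_ratio hp0
    have hc := tendsto_C hp0
    have hlog : Tendsto (fun y => Real.log (arsinhp p y / y)) (𝓝[>] (0:ℝ)) (𝓝 0) := by
      have := (Real.continuousAt_log one_ne_zero).tendsto.comp hr
      simpa [Function.comp_def] using this
    have hcomb : Tendsto (fun y => ((arsinhp p y / y) * (1 + y ^ p) ^ (1/p) - 1)
        + Real.log (arsinhp p y / y)) (𝓝[>] (0:ℝ)) (𝓝 0) := by
      have h2 := (hr.mul hc).sub_const 1
      have h3 := h2.add hlog
      simpa using h3
    refine Tendsto.congr' ?_ hcomb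
    filter_upwards [self_mem_nhdsWithin] with z hz
    have hz' : (0:ℝ) < z := hz
    have hA : 0 < arsinhp p z := A_pos hp0 hz'
    rw [Real.log_div hA.ne' hz'.ne']
    ring
  · intro y hy
    have hY : (0:ℝ) < 1 + y ^ p := base_pos hp0 hy.le
    have hA : 0 < arsinhp p y := A_pos hp0 hy
    have hC : (0:ℝ) < (1 + y ^ p) ^ (1/p) := Real.rpow_pos_of_pos hY _
    have h1 : HasDerivAt (fun y => Real.log (arsinhp p y))
        ((arsinhp p y)⁻¹ * (1 + y ^ p) ^ (-(1/p))) y :=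
      (Real.hasDerivAt_log hA.ne').comp y (hasDerivAt_arsinhp hp0 hy)
    have h2 := ((hasDerivAt_arsinhp hp0 hy).mul (hasDerivAt_Z hp0 (1/p) hy)).div
      (hasDerivAt_id y) hy.ne'
    have h3 := (h2.sub_const 1).sub ((Real.hasDerivAt_log hy.ne').sub h1)
    refine h3.congr_deriv (Eq.symm ?_)
    simp only [Pi.mul_apply, Pi.pow_apply, id_eq]
    simp only [Real.rpow_neg hY.le, Real.rpow_sub hY, Real.rpow_one]
    have hyp : y ^ p = y ^ (p-1) * y := by
      rw [← Real.rpow_add_one hy.ne' (p-1)]; ring_nf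
    rw [hyp]
    field_simp
    ring
  · intro y hy
    have hY : (0:ℝ) < 1 + y ^ p := base_pos hp0 hy.le
    have hA : 0 < arsinhp p y := A_pos hp0 hy
    have hAy : arsinhp p y < y := A_lt hp0 hy
    have hC : (0:ℝ) < (1 + y ^ p) ^ (1/p) := Real.rpow_pos_of_pos hY _
    have hY1 : (1:ℝ) ≤ 1 + y ^ p := by
      have : (0:ℝ) < y ^ p := Real.rpow_pos_of_pos hy _; linarith
    have hC2 : (1 + y ^ p) ^ (1/p) * (1 + y ^ p) ^ (1/p) ≤ 1 + y ^ p := by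
      have h := Real.rpow_le_rpow_of_exponent_le hY1 (show 2/p ≤ 1 by
        rw [div_le_one hp0]; linarith)
      rw [show (2:ℝ)/p = 1/p + 1/p by ring, Real.rpow_add hY, Real.rpow_one] at h
      exact h
    show (0:ℝ) < (y^2 * (1 + y ^ p)
      - (arsinhp p y)^2 * (1 + y ^ p) ^ (1/p) * (1 + y ^ p) ^ (1/p))
      / ((1 + y ^ p) ^ (1/p) * arsinhp p y * y^2 * (1 + y ^ p))
    apply div_pos _ (by positivity)
    have h1 : (arsinhp p y)^2 * ((1 + y ^ p) ^ (1/p) * (1 + y ^ p) ^ (1/p))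
        ≤ (arsinhp p y)^2 * (1 + y ^ p) := by
      apply mul_le_mul_of_nonneg_left hC2 (by positivity)
    nlinarith [mul_lt_mul_of_pos_right (mul_self_lt_mul_self hA.le hAy) hY]

end Aux

theorem stmt_9 (p : ℝ) (hp : 2 ≤ p) (x : ℝ) (hx : 0 < x) :
    Real.exp ((1/p) * (x / tanhp p x - 1)) < sinhp p x / x ∧
    sinhp p x / x < Real.exp (x / tanhp p x - 1) := by
  have hp0 : 0 < p := by linarith
  obtain ⟨y0, hy0, hA0⟩ := Aux.exists_A_eq (p := p) (by linarith) hx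
  have hex : ∃ a ∈ Ici (0:ℝ), arsinhp p a = x := ⟨y0, hy0, hA0⟩
  have hmem : sinhp p x ∈ Ici (0:ℝ) := Function.invFunOn_mem hex
  have hsx : arsinhp p (sinhp p x) = x := Function.invFunOn_eq hex
  set s := sinhp p x with hsdef
  have hs0 : 0 < s := by
    rcases lt_or_eq_of_le (show (0:ℝ) ≤ s from hmem) with h | h
    · exact h
    · exfalso; rw [← h] at hsx; rw [Aux.arsinhp_zero] at hsx; linarith
  have hY : (0:ℝ) < 1 + s ^ p := Aux.base_pos hp0 hs0.le
  have hC : (0:ℝ) < (1 + s ^ p) ^ (1/p : ℝ) := Real.rpow_pos_of_pos hY _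
  have hcosh : coshp p x = (1 + s ^ p) ^ (1/p : ℝ) := rfl
  have htanh : tanhp p x = s / (1 + s ^ p) ^ (1/p : ℝ) := rfl
  have hdiv : x / tanhp p x = x * (1 + s ^ p) ^ (1/p : ℝ) / s := by
    rw [htanh, div_div_eq_mul_div]
  have hlog : Real.log (s / x) = Real.log s - Real.log (arsinhp p s) := by
    rw [Real.log_div hs0.ne' hx.ne', hsx]
  have hsx' : x * (1 + s ^ p) ^ (1/p : ℝ) / s
      = arsinhp p s * (1 + s ^ p) ^ (1/p : ℝ) / s := by rw [hsx]
  have hsxpos : 0 < s / x := div_pos hs0 hx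
  constructor
  · have h1 := Aux.H1_pos hp hs0
    have : (1/p) * (x / tanhp p x - 1) < Real.log (s / x) := by
      rw [hdiv, hsx', hlog]; exact h1
    calc Real.exp ((1/p) * (x / tanhp p x - 1)) < Real.exp (Real.log (s / x)) :=
          Real.exp_lt_exp.mpr this
    _ = s / x := Real.exp_log hsxpos
  · have h2 := Aux.H2_pos hp hs0
    have : Real.log (s / x) < x / tanhp p x - 1 := by
      rw [hdiv, hsx', hlog]; exact h2
    calc s / x = Real.exp (Real.log (s / x)) := (Real.exp_log hsxpos).symm
    _ < Real.exp (x / tanhp p x - 1) := Real.exp_lt_exp.mpr this
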